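/- Let w : (0,∞) → ℝ and w₂ : (0,∞)×(0,∞) → ℝ be measurable with the product w(k₁)w₂(k₂,k₁)C(k₂) integrable on the relevant domains. If C(S,t,k₁,u₁) = ∫₀^∞ w₂(k₂,k₁) C(S,t,k₂,u₂) dk₂ for every k₁ > 0, and C(S,t,K,T) = ∫₀^∞ w(k₁) C(S,t,k₁,u₁) dk₁, then for any 0 ≤ K₁₁ ≤ K₁₂, C(S,t,K,T) = ∫_{K₁₁}^{K₁₂} w(k₁) C(S,t,k₁,u₁) dk₁ + ∫₀^∞ w̃₂(k₂) C(S,t,k₂,u₂) dk₂, where w̃₂(k₂) = ∫₀^{K₁₁} w(k₁) w₂(k₂,k₁) dk₁ + ∫_{K₁₂}^∞ w(k₁) w₂(k₂,k₁) dk₁. -/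

import Mathlib

open MeasureTheory Set

private lemma swap_key
    (w : ℝ → ℝ) (w₂ : ℝ → ℝ → ℝ) (Cu1 Cu2 : ℝ → ℝ)
    (hspan₂ : ∀ k₁ > 0, Cu1 k₁ = ∫ k₂ in Ioi (0 : ℝ), w₂ k₂ k₁ * Cu2 k₂)
    (A : Set ℝ) (hA : MeasurableSet A) (hAsub : A ⊆ Ioi (0 : ℝ))
    (hintA : IntegrableOn (fun p : ℝ × ℝ => w p.1 * w₂ p.2 p.1 * Cu2 p.2)
      (A ×ˢ (Ioi (0 : ℝ)))) :
    (∫ k₁ in A, w k₁ * Cu1 k₁) =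
      ∫ k₂ in Ioi (0 : ℝ), (∫ k₁ in A, w k₁ * w₂ k₂ k₁) * Cu2 k₂ := by
  have hprod : Integrable (fun p : ℝ × ℝ => w p.1 * w₂ p.2 p.1 * Cu2 p.2)
      ((volume.restrict A).prod (volume.restrict (Ioi (0 : ℝ)))) := by
    rwa [Measure.prod_restrict]
  calc (∫ k₁ in A, w k₁ * Cu1 k₁)
      = ∫ k₁ in A, ∫ k₂ in Ioi (0 : ℝ), w k₁ * w₂ k₂ k₁ * Cu2 k₂ := by
        refine setIntegral_congr_fun hA fun k₁ hk₁ => ?_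
        rw [hspan₂ k₁ (hAsub hk₁), ← integral_const_mul]
        congr 1; funext k₂; ring
    _ = ∫ k₂ in Ioi (0 : ℝ), ∫ k₁ in A, w k₁ * w₂ k₂ k₁ * Cu2 k₂ :=
        integral_integral_swap hprod
    _ = ∫ k₂ in Ioi (0 : ℝ), (∫ k₁ in A, w k₁ * w₂ k₂ k₁) * Cu2 k₂ := by
        congr 1; funext k₂
        rw [← integral_mul_const]

private lemma int_key
    (w : ℝ → ℝ) (w₂ : ℝ → ℝ → ℝ) (Cu2 : ℝ → ℝ)
    (A : Set ℝ)
    (hintA : IntegrableOn (fun p : ℝ × ℝ => w p.1 * w₂ p.2 p.1 * Cu2 p.2)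
      (A ×ˢ (Ioi (0 : ℝ)))) :
    IntegrableOn (fun k₂ => (∫ k₁ in A, w k₁ * w₂ k₂ k₁) * Cu2 k₂) (Ioi (0 : ℝ)) := by
  have hprod : Integrable (fun p : ℝ × ℝ => w p.1 * w₂ p.2 p.1 * Cu2 p.2)
      ((volume.restrict A).prod (volume.restrict (Ioi (0 : ℝ)))) := by
    rwa [Measure.prod_restrict]
  have h := hprod.integral_prod_right
  refine h.congr ?_
  filter_upwards with k₂
  rw [← integral_mul_const]

theorem two_maturity_spanning
    (w : ℝ → ℝ) (w₂ : ℝ → ℝ → ℝ) (Cu1 Cu2 : ℝ → ℝ) (CT : ℝ)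
    (hw_meas : Measurable w) (hw₂_meas : Measurable (fun p : ℝ × ℝ => w₂ p.1 p.2))
    (hCu2_meas : Measurable Cu2)
    (hspan₂ : ∀ k₁ > 0, Cu1 k₁ = ∫ k₂ in Ioi (0 : ℝ), w₂ k₂ k₁ * Cu2 k₂)
    (hspan₁ : CT = ∫ k₁ in Ioi (0 : ℝ), w k₁ * Cu1 k₁)
    (K₁₁ K₁₂ : ℝ) (h0 : 0 ≤ K₁₁) (h12 : K₁₁ ≤ K₁₂)
    (hint₁ : IntegrableOn (fun k₁ => w k₁ * Cu1 k₁) (Ioi (0 : ℝ)))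
    (hint : IntegrableOn (fun p : ℝ × ℝ => w p.1 * w₂ p.2 p.1 * Cu2 p.2)
      ((Ioi (0 : ℝ)) ×ˢ (Ioi (0 : ℝ))))
    (wt₂ : ℝ → ℝ)
    (hwt₂ : ∀ k₂, wt₂ k₂ =
      (∫ k₁ in Ioo (0 : ℝ) K₁₁, w k₁ * w₂ k₂ k₁) +
        ∫ k₁ in Ioi K₁₂, w k₁ * w₂ k₂ k₁) :
    CT = (∫ k₁ in Ioc K₁₁ K₁₂, w k₁ * Cu1 k₁) +
      ∫ k₂ in Ioi (0 : ℝ), wt₂ k₂ * Cu2 k₂ := by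
  have hK₂ : (0 : ℝ) ≤ K₁₂ := h0.trans h12
  set F := fun k₁ => w k₁ * Cu1 k₁ with hF
  -- split the first-maturity integral into three pieces
  have hsub1 : Ioo (0 : ℝ) K₁₁ ⊆ Ioi (0 : ℝ) := Ioo_subset_Ioi_self
  have hsub2 : Ioc K₁₁ K₁₂ ⊆ Ioi (0 : ℝ) := fun x hx => lt_of_le_of_lt h0 hx.1
  have hsub3 : Ioi K₁₂ ⊆ Ioi (0 : ℝ) := fun x hx => lt_of_le_of_lt hK₂ hx
  have hdisj1 : Disjoint (Ioc (0 : ℝ) K₁₂) (Ioi K₁₂) := Ioc_disjoint_Ioi le_rfl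
  have hdisj2 : Disjoint (Ioc (0 : ℝ) K₁₁) (Ioc K₁₁ K₁₂) := Ioc_disjoint_Ioc_of_le le_rfl
  have hu1 : Ioc (0 : ℝ) K₁₂ ∪ Ioi K₁₂ = Ioi (0 : ℝ) := Ioc_union_Ioi_eq_Ioi hK₂
  have hu2 : Ioc (0 : ℝ) K₁₁ ∪ Ioc K₁₁ K₁₂ = Ioc (0 : ℝ) K₁₂ := Ioc_union_Ioc_eq_Ioc h0 h12
  have hsplit : (∫ k₁ in Ioi (0 : ℝ), F k₁) =
      ((∫ k₁ in Ioo (0 : ℝ) K₁₁, F k₁) + ∫ k₁ in Ioc K₁₁ K₁₂, F k₁) + ∫ k₁ in Ioi K₁₂, F k₁ := by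
    rw [← hu1, setIntegral_union hdisj1 measurableSet_Ioi
        (hint₁.mono_set (hu1 ▸ subset_union_left))
        (hint₁.mono_set hsub3)]
    congr 1
    rw [← hu2, setIntegral_union hdisj2 measurableSet_Ioc
        (hint₁.mono_set ((Ioc_subset_Ioc_right h12).trans (hu1 ▸ subset_union_left)))
        (hint₁.mono_set hsub2)]
    congr 1
    exact integral_Ioc_eq_integral_Ioo
  -- apply Fubini on the two outer pieces
  have hintA1 : IntegrableOn (fun p : ℝ × ℝ => w p.1 * w₂ p.2 p.1 * Cu2 p.2)
      ((Ioo (0 : ℝ) K₁₁) ×ˢ (Ioi (0 : ℝ))) :=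
    hint.mono_set (prod_mono_left hsub1)
  have hintA3 : IntegrableOn (fun p : ℝ × ℝ => w p.1 * w₂ p.2 p.1 * Cu2 p.2)
      ((Ioi K₁₂) ×ˢ (Ioi (0 : ℝ))) :=
    hint.mono_set (prod_mono_left hsub3)
  have h1 := swap_key w w₂ Cu1 Cu2 hspan₂ _ measurableSet_Ioo hsub1 hintA1
  have h3 := swap_key w w₂ Cu1 Cu2 hspan₂ _ measurableSet_Ioi hsub3 hintA3
  have hi1 := int_key w w₂ Cu2 _ hintA1
  have hi3 := int_key w w₂ Cu2 _ hintA3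
  have hsum : (∫ k₁ in Ioo (0 : ℝ) K₁₁, F k₁) + (∫ k₁ in Ioi K₁₂, F k₁) =
      ∫ k₂ in Ioi (0 : ℝ), wt₂ k₂ * Cu2 k₂ := by
    rw [hF] at *
    rw [h1, h3, ← integral_add hi1 hi3]
    refine integral_congr_ae ?_
    filter_upwards with k₂
    rw [hwt₂ k₂]; ring
  rw [hspan₁, hsplit]
  linarith [hsum]
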